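/- Let A be a real symmetric matrix indexed by (Fin p × Fin q) with nonpositive off-diagonal entries, trace 1, and all row sums equal to zero (i.e., A ∈ S_1^0). Then the partial transpose A^pT has all row sums equal to zero if and only if A^pT is positive semidefinite. -/

import Mathlib

open Matrix BigOperators Kronecker
open scoped ComplexOrder

noncomputable section

/-- The `(p,q)`-partial transpose of a matrix indexed by `Fin p × Fin q`:
`A^pT_{(i,j),(k,l)} = A_{(i,l),(k,j)}`. -/
def ptrans {p q : ℕ} {α : Type*} (A : Matrix (Fin p × Fin q) (Fin p × Fin q) α) :
    Matrix (Fin p × Fin q) (Fin p × Fin q) α :=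
  fun x y => A (x.1, y.2) (y.1, x.2)

/-- A density matrix: Hermitian, positive semidefinite, with trace 1. -/
def IsDensityMatrix {n : Type*} [Fintype n] (ρ : Matrix n n ℂ) : Prop :=
  ρ.IsHermitian ∧ ρ.PosSemidef ∧ ρ.trace = 1

/-- Separability in ℂ^p ⊗ ℂ^q : a finite convex combination of Kronecker products
of density matrices. -/
def SeparableState {p q : ℕ} (A : Matrix (Fin p × Fin q) (Fin p × Fin q) ℂ) : Prop :=
  ∃ (m : ℕ) (c : Fin m → ℝ) (ρ : Fin m → Matrix (Fin p) (Fin p) ℂ)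
    (η : Fin m → Matrix (Fin q) (Fin q) ℂ),
    (∀ i, 0 ≤ c i) ∧ (∑ i, c i) = 1 ∧
    (∀ i, IsDensityMatrix (ρ i)) ∧ (∀ i, IsDensityMatrix (η i)) ∧
    A = ∑ i, (c i : ℂ) • (ρ i ⊗ₖ η i)

/-- Separability of a real matrix, viewed as a complex matrix. -/
def SeparableStateR {p q : ℕ} (A : Matrix (Fin p × Fin q) (Fin p × Fin q) ℝ) : Prop :=
  SeparableState (A.map (fun x => (x : ℂ)))

/-- A square real matrix is line sum symmetric if each row sum equals the
corresponding column sum. -/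
def LineSumSymm {q : ℕ} (B : Matrix (Fin q) (Fin q) ℝ) : Prop :=
  ∀ j, (∑ l, B j l) = ∑ l, B l j

/-- A simple circuit matrix: there are distinct indices `i_1, …, i_k` (`k ≥ 1`) with
`C_{i_m i_{m+1}} = 1` (cyclically) and all other entries 0. -/
def IsSimpleCircuit {q : ℕ} (C : Matrix (Fin q) (Fin q) ℝ) : Prop :=
  ∃ (k : ℕ) (hk : 0 < k) (f : Fin k → Fin q), Function.Injective f ∧
    ∀ a b : Fin q, C a b =
      if ∃ m : Fin k, a = f m ∧ b = f ⟨((m : ℕ) + 1) % k, Nat.mod_lt _ hk⟩ then 1 else 0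

/-- The 2q×2q block matrix `[[A11, A12], [A21, A22]]` indexed by `Fin 2 × Fin q`. -/
def twoBlock {q : ℕ} {α : Type*} (A11 A12 A21 A22 : Matrix (Fin q) (Fin q) α) :
    Matrix (Fin 2 × Fin q) (Fin 2 × Fin q) α :=
  fun a b =>
    if a.1 = 0 then (if b.1 = 0 then A11 a.2 b.2 else A12 a.2 b.2)
    else (if b.1 = 0 then A21 a.2 b.2 else A22 a.2 b.2)

/-- The q×q block `A^{i,k}` of a matrix indexed by `Fin p × Fin q`. -/
def blockOf {p q : ℕ} (A : Matrix (Fin p × Fin q) (Fin p × Fin q) ℝ) (i k : Fin p) :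
    Matrix (Fin q) (Fin q) ℝ :=
  fun j l => A (i, j) (k, l)

lemma lap_psd {n : Type*} [Fintype n] [DecidableEq n] (B : Matrix n n ℝ)
    (hsymm : B.IsSymm) (hoff : ∀ x y, x ≠ y → B x y ≤ 0)
    (hrow : ∀ x, (∑ y, B x y) = 0) : B.PosSemidef := by
  rw [posSemidef_iff_dotProduct_mulVec]
  constructor
  · ext x y; simpa using hsymm.apply x y
  · intro x
    have hcol : ∀ y, (∑ u, B u y) = 0 := by
      intro y
      rw [← hrow y]
      exact Finset.sum_congr rfl fun u _ => hsymm.apply y u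
    have hs : star x = x := funext fun _ => rfl
    have key : star x ⬝ᵥ B *ᵥ x = (1/2) * ∑ u, ∑ v, (-B u v) * (x u - x v)^2 := by
      rw [hs]
      have expand : ∀ u v : n, (-B u v) * (x u - x v)^2
          = (2 * (x u * (B u v * x v)) - B u v * x u ^ 2) - B u v * x v ^ 2 := by
        intros; ring
      simp_rw [expand, Finset.sum_sub_distrib]
      have h1 : ∑ u, ∑ v, B u v * x u ^ 2 = 0 := by
        refine Finset.sum_eq_zero fun u _ => ?_
        rw [← Finset.sum_mul, hrow u, zero_mul]
      have h2 : ∑ u, ∑ v, B u v * x v ^ 2 = 0 := by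
        rw [Finset.sum_comm]
        refine Finset.sum_eq_zero fun v _ => ?_
        rw [← Finset.sum_mul, hcol v, zero_mul]
      rw [h1, h2, sub_zero, sub_zero]
      simp only [dotProduct, mulVec, dotProduct, Finset.mul_sum]
      exact Finset.sum_congr rfl fun u _ => Finset.sum_congr rfl fun v _ => by ring
    rw [key]
    refine mul_nonneg (by norm_num) (Finset.sum_nonneg fun u _ => Finset.sum_nonneg fun v _ => ?_)
    rcases eq_or_ne u v with rfl | h
    · simp
    · exact mul_nonneg (neg_nonneg.mpr (hoff u v h)) (sq_nonneg _)


/-- for `A ∈ S_1^0`, the partial transpose has zero row sums iff it is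
positive semidefinite. -/
theorem stmt3 {p q : ℕ} (A : Matrix (Fin p × Fin q) (Fin p × Fin q) ℝ)
    (hsymm : A.IsSymm)
    (hoff : ∀ x y, x ≠ y → A x y ≤ 0)
    (htr : A.trace = 1)
    (hrow : ∀ x, (∑ y, A x y) = 0) :
    (∀ x, (∑ y, ptrans A x y) = 0) ↔ (ptrans A).PosSemidef := by
  have hBsymm : (ptrans A).IsSymm :=
    Matrix.IsSymm.ext fun i j => hsymm.apply (i.1, j.2) (j.1, i.2)
  have hBoff : ∀ x y, x ≠ y → ptrans A x y ≤ 0 := by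
    intro x y hxy
    refine hoff _ _ fun h => hxy ?_
    rw [Prod.mk.injEq] at h
    exact Prod.ext h.1 h.2.symm
  constructor
  · exact fun h => lap_psd _ hBsymm hBoff h
  · intro hpsd
    have swap3 : ∀ (f : Fin q → Fin p → Fin q → ℝ),
        ∑ j, ∑ k, ∑ l, f j k l = ∑ l, ∑ k, ∑ j, f j k l := by
      intro f
      calc ∑ j, ∑ k, ∑ l, f j k l
          = ∑ j, ∑ l, ∑ k, f j k l :=
            Finset.sum_congr rfl fun j _ => Finset.sum_comm
        _ = ∑ l, ∑ j, ∑ k, f j k l := Finset.sum_comm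
        _ = ∑ l, ∑ k, ∑ j, f j k l :=
            Finset.sum_congr rfl fun l _ => Finset.sum_comm
    have htot : ∑ x, ∑ y, ptrans A x y = 0 := by
      have h1 : ∑ x, ∑ y, ptrans A x y
          = ∑ i : Fin p, ∑ j : Fin q, ∑ k : Fin p, ∑ l : Fin q, A (i, l) (k, j) := by
        rw [Fintype.sum_prod_type]
        exact Finset.sum_congr rfl fun i _ => Finset.sum_congr rfl fun j _ =>
          Fintype.sum_prod_type _
      rw [h1]
      have h2 : ∀ i : Fin p, ∑ j : Fin q, ∑ k : Fin p, ∑ l : Fin q, A (i, l) (k, j)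
          = ∑ l : Fin q, ∑ k : Fin p, ∑ j : Fin q, A (i, l) (k, j) := fun i =>
        swap3 (fun j k l => A (i, l) (k, j))
      simp_rw [h2]
      refine Finset.sum_eq_zero fun i _ => Finset.sum_eq_zero fun l _ => ?_
      have := hrow (i, l)
      rwa [Fintype.sum_prod_type] at this
    have h0 : star (fun _ => (1:ℝ)) ⬝ᵥ (ptrans A) *ᵥ (fun _ => (1:ℝ)) = 0 := by
      simpa [dotProduct, mulVec] using htot
    have hker := (hpsd.dotProduct_mulVec_zero_iff _).mp h0
    intro x
    have hx := congrFun hker x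
    simpa [mulVec, dotProduct] using hx
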